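/- Let h > 0 and let f be defined on the grid {a, a+h, ..., b} ⊂ hℤ with f(a) ≥ h and (f(x+h) − f(x))/h ≥ 2 for all grid points x ∈ [a, b−h]. Then h·Σ_{x ∈ grid, a ≤ x < b} f(x) ≥ (b−a)^2. -/
import Mathlib

lemma odd_sum_aux (h : ℝ) (n : ℕ) :
    ∑ i ∈ Finset.range n, (2 * (i : ℝ) + 1) * h = (n : ℝ) ^ 2 * h := by
  induction n with
  | zero => simp
  | succ m ih =>
    rw [Finset.sum_range_succ, ih]
    push_cast
    ring

theorem discrete_key_lemma (a h : ℝ) (hh : 0 < h) (n : ℕ) (hn : 0 < n)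
    (f : ℝ → ℝ) (hfa : h ≤ f a)
    (hdiff : ∀ i < n, (f (a + (i + 1) * h) - f (a + i * h)) / h ≥ 2) :
    h * ∑ i ∈ Finset.range n, f (a + i * h) ≥ (n * h) ^ 2 := by
  have key : ∀ i, i ≤ n → (2 * (i : ℝ) + 1) * h ≤ f (a + i * h) := by
    intro i
    induction i with
    | zero => intro _; simpa using hfa
    | succ k ih =>
      intro hk
      have hk' : k < n := by omega
      have h1 := ih hk'.le
      have h2 := hdiff k hk'
      have h3 : f (a + (k + 1) * h) - f (a + k * h) ≥ 2 * h := by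
        rw [ge_iff_le, le_div_iff₀ hh] at h2
        linarith
      push_cast
      push_cast at h1 h3
      nlinarith
  have sum_ge : ∑ i ∈ Finset.range n, (2 * (i : ℝ) + 1) * h ≤
      ∑ i ∈ Finset.range n, f (a + i * h) :=
    Finset.sum_le_sum fun i hi => key i (Finset.mem_range.mp hi).le
  rw [odd_sum_aux h n] at sum_ge
  nlinarith
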